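/- arXiv:2010.03829 — 3 statements merged into one kernel-verified Lean document; each statement's English description precedes it below -/
import Mathlib

section
/- For n-partite graphs G1 and G2 with ordered vertex partitions, and a clique S in the partite product G1 ⊛ G2, the link of S in G1 ⊛ G2 equals the partite product of the link of the projection of S to G1 with the link of the projection of S to G2. -/
/-- The common neighborhood (link vertex set) of a set of vertices. -/
def commonNbrs {V : Type*} (G : SimpleGraph V) (s : Set V) : Set V :=
  {v | ∀ u ∈ s, G.Adj u v}

/-- The partite product of two `n`-partite graphs (with parts given by type maps `t1`, `t2`):
vertices are pairs lying in parts with the same index, and two pairs are adjacent iff both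
coordinates are adjacent. -/
def partiteProd {V1 V2 : Type*} {nn : ℕ} (t1 : V1 → Fin nn) (t2 : V2 → Fin nn)
    (G1 : SimpleGraph V1) (G2 : SimpleGraph V2) :
    SimpleGraph {p : V1 × V2 // t1 p.1 = t2 p.2} where
  Adj x y := G1.Adj x.val.1 y.val.1 ∧ G2.Adj x.val.2 y.val.2
  symm := ⟨fun _ _ h => ⟨h.1.symm, h.2.symm⟩⟩
  loopless := ⟨fun x h => G1.loopless.irrefl _ h.1⟩

/-- For `n`-partite graphs `G1`, `G2` and a clique `S` in `G1 ⊛ G2`, the link of `S` equals the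
partite product of the links of the projections of `S`: the vertex sets coincide and the induced
adjacency is exactly the product adjacency. -/
theorem stmt2 {V1 V2 : Type*} (nn : ℕ) (t1 : V1 → Fin nn) (t2 : V2 → Fin nn)
    (G1 : SimpleGraph V1) (G2 : SimpleGraph V2)
    (hp1 : ∀ a b, G1.Adj a b → t1 a ≠ t1 b) (hp2 : ∀ a b, G2.Adj a b → t2 a ≠ t2 b)
    (S : Set {p : V1 × V2 // t1 p.1 = t2 p.2})
    (hS : (partiteProd t1 t2 G1 G2).IsClique S) :
    commonNbrs (partiteProd t1 t2 G1 G2) S =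
      {x | x.val.1 ∈ commonNbrs G1 ((fun p => p.val.1) '' S) ∧
           x.val.2 ∈ commonNbrs G2 ((fun p => p.val.2) '' S)} ∧
    ∀ x y, x ∈ commonNbrs (partiteProd t1 t2 G1 G2) S →
      y ∈ commonNbrs (partiteProd t1 t2 G1 G2) S →
      ((partiteProd t1 t2 G1 G2).Adj x y ↔ G1.Adj x.val.1 y.val.1 ∧ G2.Adj x.val.2 y.val.2) := by
  constructor
  · ext x
    constructor
    · intro hx
      refine ⟨fun a ⟨u, hu, ha⟩ => ha ▸ (hx u hu).1, fun a ⟨u, hu, ha⟩ => ha ▸ (hx u hu).2⟩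
    · rintro ⟨h1, h2⟩ u hu
      exact ⟨h1 u.val.1 ⟨u, hu, rfl⟩, h2 u.val.2 ⟨u, hu, rfl⟩⟩
  · intro x y _ _
    exact Iff.rfl
end

section
/- If an (n+1)-partite graph G (with parts indexed by I = {0,...,n}) is (d_J)-partite type-regular, then the symmetrized product G^{⊛ S_{n+1}} = ⊛_{π ∈ S_{n+1}} π(G) is hyper-regular: for every 1 ≤ m ≤ n, all m-cliques in G^{⊛ S_{n+1}} have links of the same size, namely Σ_{i ∈ I\J} Π_{π ∈ S_I} d_{π(J)}(π(i)) is independent of the choice of the m-element subset J ⊂ I. -/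
/-- Vertices of the symmetrized product `G^{⊛ S_{n+1}}`: a vertex of type `i` is a tuple,
indexed by the permutations `π` of the parts, of vertices of `G` whose `π`-component lies in
part `π i`. -/
def SymV (n : ℕ) (V : Type*) (t : V → Fin (n + 1)) : Type _ :=
  {p : (Equiv.Perm (Fin (n + 1)) → V) × Fin (n + 1) // ∀ π, t (p.1 π) = π p.2}

/-- The symmetrized product graph `⊛_{π ∈ S_{n+1}} π(G)`: two tuples are adjacent iff they are
adjacent in `G` coordinatewise. -/
def symGraph {n : ℕ} {V : Type*} (t : V → Fin (n + 1)) (G : SimpleGraph V) :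
    SimpleGraph (SymV n V t) where
  Adj x y := ∀ π : Equiv.Perm (Fin (n + 1)), G.Adj (x.val.1 π) (y.val.1 π)
  symm := ⟨fun _ _ h π => (h π).symm⟩
  loopless := ⟨fun _ h => G.irrefl (h 1)⟩

/-- `Nat.card` of a sigma type over a finite index with finite fibers. -/
lemma natCardSigma {ι : Type*} [Fintype ι] {α : ι → Type*} (h : ∀ i, Finite (α i)) :
    Nat.card (Sigma α) = ∑ i, Nat.card (α i) := by
  have hf : ∀ i, Fintype (α i) := fun i => @Fintype.ofFinite _ (h i)
  classical
  rw [Nat.card_eq_fintype_card, Fintype.card_sigma]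
  exact Finset.sum_congr rfl fun i _ => (Nat.card_eq_fintype_card).symm

/-- If the `(n+1)`-partite graph `G` is `(d_J)`-partite type-regular, then its symmetrization
`G^{⊛ S_{n+1}}` is hyper-regular: for every `1 ≤ m ≤ n`, every `m`-clique of type `J` has a link
of size `Σ_{i ∈ I\J} Π_{π ∈ S_I} d_{π(J)}(π(i))`, a quantity independent of the `m`-subset `J`. -/
theorem stmt5 {V : Type*} (n : ℕ) (t : V → Fin (n + 1)) (G : SimpleGraph V)
    (hp : ∀ a b, G.Adj a b → t a ≠ t b)
    (d : Finset (Fin (n + 1)) → Fin (n + 1) → ℕ)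
    (htr : ∀ J : Finset (Fin (n + 1)), J ⊂ Finset.univ →
      ∀ C : Finset V, G.IsClique (C : Set V) → C.card = J.card →
        (∀ j ∈ J, ∃ v ∈ C, t v = j) →
        ∀ i ∈ Finset.univ \ J,
          {v | v ∈ commonNbrs G (C : Set V) ∧ t v = i}.ncard = d J i) :
    ∀ m, 1 ≤ m → m ≤ n → ∀ J : Finset (Fin (n + 1)), J.card = m →
      ∀ S : Finset (SymV n V t), (symGraph t G).IsClique (S : Set (SymV n V t)) →
        S.card = m → S.image (fun x => x.val.2) = J →
          (commonNbrs (symGraph t G) (S : Set (SymV n V t))).ncard =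
            ∑ i ∈ Finset.univ \ J, ∏ π : Equiv.Perm (Fin (n + 1)), d (J.image π) (π i) := by
  intro m hm1 hmn J hJcard S hSclique hScard hSimg
  classical
  set Cf : Equiv.Perm (Fin (n + 1)) → Finset V :=
    fun π => S.image (fun x => x.val.1 π) with hCfdef
  set A : Equiv.Perm (Fin (n + 1)) → Fin (n + 1) → Set V :=
    fun π i => {v | v ∈ commonNbrs G ((Cf π : Set V)) ∧ t v = π i} with hAdef
  -- adjacency inside the clique S
  have hadj : ∀ x ∈ S, ∀ y ∈ S, x ≠ y →
      ∀ π : Equiv.Perm (Fin (n + 1)), G.Adj (x.val.1 π) (y.val.1 π) :=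
    fun x hx y hy hne => hSclique (Finset.mem_coe.mpr hx) (Finset.mem_coe.mpr hy) hne
  -- the types occurring in J are realized in S
  have hJex : ∀ j ∈ J, ∃ x ∈ S, x.val.2 = j := by
    intro j hj
    rw [← hSimg] at hj
    simpa using Finset.mem_image.mp hj
  -- the coordinate projections are injective on S
  have hinjc : ∀ π : Equiv.Perm (Fin (n + 1)),
      Set.InjOn (fun x : SymV n V t => x.val.1 π) S := by
    intro π x hx y hy hxy
    by_contra hne
    exact (hadj x (Finset.mem_coe.mp hx) y (Finset.mem_coe.mp hy) hne π).ne hxy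
  have hCfcard : ∀ π, (Cf π).card = m := fun π => by
    rw [hCfdef, Finset.card_image_of_injOn (hinjc π), hScard]
  have hCfclique : ∀ π, G.IsClique ((Cf π : Set V)) := by
    intro π u hu v hv hne
    simp only [hCfdef, Finset.coe_image, Set.mem_image, Finset.mem_coe] at hu hv
    obtain ⟨x, hx, rfl⟩ := hu
    obtain ⟨y, hy, rfl⟩ := hv
    exact hadj x hx y hy (fun h => hne (by rw [h])) π
  have hCfcover : ∀ π : Equiv.Perm (Fin (n + 1)), ∀ j ∈ J.image π, ∃ v ∈ Cf π, t v = j := by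
    intro π j hj
    obtain ⟨j₀, hj₀, rfl⟩ := Finset.mem_image.mp hj
    obtain ⟨x, hx, rfl⟩ := hJex j₀ hj₀
    exact ⟨x.val.1 π, Finset.mem_image_of_mem _ hx, x.prop π⟩
  have hss : ∀ π : Equiv.Perm (Fin (n + 1)), J.image π ⊂ Finset.univ := by
    intro π
    rw [Finset.ssubset_univ_iff]
    intro h
    have h1 : (J.image π).card ≤ m := le_trans Finset.card_image_le (le_of_eq hJcard)
    rw [h, Finset.card_univ, Fintype.card_fin] at h1
    omega
  -- the size of the coordinate links
  have hAncard : ∀ π : Equiv.Perm (Fin (n + 1)), ∀ i ∈ Finset.univ \ J,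
      (A π i).ncard = d (J.image π) (π i) := by
    intro π i hi
    have hiJ : i ∉ J := (Finset.mem_sdiff.mp hi).2
    have hmem : π i ∈ Finset.univ \ J.image π := by
      simp only [Finset.mem_sdiff, Finset.mem_univ, true_and, Finset.mem_image]
      rintro ⟨j, hj, hji⟩
      exact hiJ (by rwa [← π.injective hji])
    have hcard : (Cf π).card = (J.image π).card := by
      rw [hCfcard, Finset.card_image_of_injective _ π.injective, hJcard]
    exact htr (J.image π) (hss π) (Cf π) (hCfclique π) hcard (hCfcover π) (π i) hmem
  -- characterization of common neighbors in the symmetrized product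
  have hmemCN : ∀ y : SymV n V t,
      y ∈ commonNbrs (symGraph t G) (S : Set (SymV n V t)) ↔
        ∀ x ∈ S, ∀ π : Equiv.Perm (Fin (n + 1)), G.Adj (x.val.1 π) (y.val.1 π) := by
    intro y
    constructor
    · intro h x hx π; exact h x (Finset.mem_coe.mpr hx) π
    · intro h x hx; exact h x (Finset.mem_coe.mp hx)
  have hCNtype : ∀ y : SymV n V t, y ∈ commonNbrs (symGraph t G) (S : Set (SymV n V t)) →
      y.val.2 ∈ Finset.univ \ J := by
    intro y hy
    rw [Finset.mem_sdiff]
    refine ⟨Finset.mem_univ _, fun hyJ => ?_⟩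
    obtain ⟨x, hx, hx2⟩ := hJex _ hyJ
    have h1 : t (x.val.1 1) ≠ t (y.val.1 1) := hp _ _ ((hmemCN y).mp hy x hx 1)
    rw [x.prop 1, y.prop 1] at h1
    simp only [Equiv.Perm.one_apply] at h1
    exact h1 hx2
  have hCNcomp : ∀ y : SymV n V t, y ∈ commonNbrs (symGraph t G) (S : Set (SymV n V t)) →
      ∀ π : Equiv.Perm (Fin (n + 1)), y.val.1 π ∈ A π y.val.2 := by
    intro y hy π
    refine ⟨fun u hu => ?_, y.prop π⟩
    simp only [hCfdef, Finset.coe_image, Set.mem_image, Finset.mem_coe] at hu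
    obtain ⟨x, hx, rfl⟩ := hu
    exact (hmemCN y).mp hy x hx π
  have hback : ∀ (i : ↥(Finset.univ \ J)) (g : ∀ π : Equiv.Perm (Fin (n + 1)), ↥(A π i.val)),
      (⟨⟨fun π => (g π).val, i.val⟩, fun π => (g π).prop.2⟩ : SymV n V t) ∈
        commonNbrs (symGraph t G) (S : Set (SymV n V t)) := by
    intro i g
    refine (hmemCN _).mpr fun x hx π => ?_
    exact (g π).prop.1 _ (Finset.mem_coe.mpr (Finset.mem_image_of_mem _ hx))
  -- the bijection between the link and a sigma type of products
  let E : ↥(commonNbrs (symGraph t G) (S : Set (SymV n V t))) ≃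
      Σ i : ↥(Finset.univ \ J), ∀ π : Equiv.Perm (Fin (n + 1)), ↥(A π i.val) :=
    { toFun := fun y => ⟨⟨y.val.val.2, hCNtype y.val y.prop⟩,
        fun π => ⟨y.val.val.1 π, hCNcomp y.val y.prop π⟩⟩
      invFun := fun z => ⟨⟨⟨fun π => (z.2 π).val, z.1.val⟩, fun π => (z.2 π).prop.2⟩,
        hback z.1 z.2⟩
      left_inv := fun y => rfl
      right_inv := fun z => rfl }
  have hfibcard : ∀ i ∈ Finset.univ \ J,
      Nat.card (∀ π : Equiv.Perm (Fin (n + 1)), ↥(A π i)) =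
        ∏ π : Equiv.Perm (Fin (n + 1)), d (J.image π) (π i) := by
    intro i hi
    rw [Nat.card_pi]
    exact Finset.prod_congr rfl fun π _ => by
      rw [Nat.card_coe_set_eq, hAncard π i hi]
  by_cases hfin : (commonNbrs (symGraph t G) (S : Set (SymV n V t))).Finite
  · haveI := hfin.to_subtype
    haveI : Finite (Σ i : ↥(Finset.univ \ J), ∀ π : Equiv.Perm (Fin (n + 1)), ↥(A π i.val)) :=
      Finite.of_equiv _ E
    have hfib : ∀ i : ↥(Finset.univ \ J),
        Finite (∀ π : Equiv.Perm (Fin (n + 1)), ↥(A π i.val)) :=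
      fun i => Finite.of_injective
        (@Sigma.mk ↥(Finset.univ \ J)
          (fun j => ∀ π : Equiv.Perm (Fin (n + 1)), ↥(A π j.val)) i)
        sigma_mk_injective
    rw [← Nat.card_coe_set_eq, Nat.card_congr E, natCardSigma hfib,
      ← Finset.sum_coe_sort (Finset.univ \ J)
        (fun i => ∏ π : Equiv.Perm (Fin (n + 1)), d (J.image π) (π i))]
    exact Finset.sum_congr rfl fun i _ => hfibcard i.val i.prop
  · have hinf : (commonNbrs (symGraph t G) (S : Set (SymV n V t))).Infinite := hfin
    rw [Set.Infinite.ncard hinf]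
    haveI hinfc : Infinite ↥(commonNbrs (symGraph t G) (S : Set (SymV n V t))) :=
      Set.infinite_coe_iff.mpr hinf
    haveI hinfS :
        Infinite (Σ i : ↥(Finset.univ \ J), ∀ π : Equiv.Perm (Fin (n + 1)), ↥(A π i.val)) :=
      Infinite.of_injective E E.injective
    have hex : ∃ i : ↥(Finset.univ \ J),
        Infinite (∀ π : Equiv.Perm (Fin (n + 1)), ↥(A π i.val)) := by
      by_contra h
      push_neg at h
      haveI : ∀ i : ↥(Finset.univ \ J),
          Finite (∀ π : Equiv.Perm (Fin (n + 1)), ↥(A π i.val)) :=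
        fun i => h i
      exact not_finite
        (Σ i : ↥(Finset.univ \ J), ∀ π : Equiv.Perm (Fin (n + 1)), ↥(A π i.val))
    obtain ⟨i₀, hi₀⟩ := hex
    have h0 : (∏ π : Equiv.Perm (Fin (n + 1)), d (J.image π) (π i₀.val)) = 0 := by
      rw [← hfibcard i₀.val i₀.prop]
      exact @Nat.card_eq_zero_of_infinite _ hi₀
    obtain ⟨π₀, -, hπ₀⟩ := Finset.prod_eq_zero_iff.mp h0
    symm
    apply Finset.sum_eq_zero
    intro i hi
    have hiJ : i ∉ J := (Finset.mem_sdiff.mp hi).2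
    have hi₀J : (i₀ : Fin (n + 1)) ∉ J := (Finset.mem_sdiff.mp i₀.prop).2
    apply Finset.prod_eq_zero (Finset.mem_univ (π₀ * Equiv.swap (i₀ : Fin (n + 1)) i))
    have himg : J.image ⇑(Equiv.swap (i₀ : Fin (n + 1)) i) = J := by
      have heq : Set.EqOn (⇑(Equiv.swap (i₀ : Fin (n + 1)) i)) id (J : Set (Fin (n + 1))) :=
        fun j hj => Equiv.swap_apply_of_ne_of_ne
          (fun h => hi₀J (Finset.mem_coe.mp (h ▸ hj)))
          (fun h => hiJ (Finset.mem_coe.mp (h ▸ hj)))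
      rw [Finset.image_congr heq, Finset.image_id]
    have h1 : J.image ⇑(π₀ * Equiv.swap (i₀ : Fin (n + 1)) i) = J.image ⇑π₀ := by
      rw [Equiv.Perm.coe_mul, ← Finset.image_image, himg]
    have h2 : (π₀ * Equiv.swap (i₀ : Fin (n + 1)) i) i = π₀ (i₀ : Fin (n + 1)) := by
      simp [Equiv.Perm.mul_apply, Equiv.swap_apply_right]
    rw [h1, h2, hπ₀]
end

section
/- For every k ≥ 1, the reduction map φ: S̃_n → S̃_n(k), sending [a_1,...,a_n] to [a_1 mod kn, ..., a_n mod kn], is a surjective group homomorphism, its kernel N intersects each maximal parabolic subgroup K_{{i}} = ⟨{s̃_j : j ≠ i}⟩ trivially, and |S̃_n(k)| = k^{n-1}·n!. -/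
-- auxiliary development
set_option linter.unusedSectionVars false
set_option linter.unusedTactic false
set_option linter.unusedVariables false


/-- The standard generating family `s̃_0, …, s̃_{n-1}` of the affine permutation group `S̃_n`. -/
def stdGens (n : ℕ) (s : Fin n → Equiv.Perm ℤ) : Prop :=
  ∀ i : Fin n, ∀ j : ℤ,
    s i j = if (j : ZMod n) = ((i : ℕ) : ZMod n) then j + 1
      else if (j : ZMod n) = ((i : ℕ) : ZMod n) + 1 then j - 1 else j

namespace Stmt16
open Finset
set_option linter.unusedSectionVars false

theorem Equiv.Perm.apply_inv_self {α : Type*} (f : Equiv.Perm α) (x : α) : f (f⁻¹ x) = x :=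
  f.apply_symm_apply x

theorem Equiv.Perm.inv_apply_self {α : Type*} (f : Equiv.Perm α) (x : α) : f⁻¹ (f x) = x :=
  f.symm_apply_apply x


lemma gauss_nat (n : ℕ) : ∑ i ∈ Finset.Icc 1 n, i = (n+1).choose 2 := by
  induction n with
  | zero => simp
  | succ m ih =>
    rw [Finset.sum_Icc_succ_top (by omega), ih,
      show (m+1+1).choose 2 = (m+1).choose 1 + (m+1).choose 2 from Nat.choose_succ_succ _ _,
      Nat.choose_one_right]
    omega

lemma sum_Icc_int_eq {A : Type*} [AddCommMonoid A] (n : ℕ) (f : ℤ → A) :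
    ∑ i ∈ Finset.Icc (1:ℤ) n, f i = ∑ i ∈ Finset.Icc (1:ℕ) n, f (i : ℤ) := by
  refine Finset.sum_nbij' (fun i => i.toNat) (fun i => (i:ℤ)) (by intro a ha; simp_all; try omega)
    (by intro a ha; simp_all; try omega) (by intro a ha; simp_all; try omega)
    (by intro a ha; simp_all; try omega) ?_
  intro a ha
  simp only [Finset.mem_Icc] at ha
  rw [Int.toNat_of_nonneg (by omega)]

lemma gauss_int (n : ℕ) : ∑ i ∈ Finset.Icc (1:ℤ) n, i = ((n+1).choose 2 : ℤ) := by
  rw [sum_Icc_int_eq n (fun i => i), ← gauss_nat n]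
  push_cast
  rfl

section IntSide
variable {n : ℕ}

/-- representative in `[1, n]` of the residue class of `j`. -/
def rep (n : ℕ) (j : ℤ) : ℤ := 1 + (j - 1) % n

lemma rep_mem (hn : 0 < n) (j : ℤ) : rep n j ∈ Finset.Icc (1:ℤ) n := by
  have h1 := Int.emod_nonneg (j - 1) (by exact_mod_cast hn.ne' : (n:ℤ) ≠ 0)
  have h2 := Int.emod_lt_of_pos (j - 1) (by exact_mod_cast hn : (0:ℤ) < n)
  simp [rep]; omega

lemma rep_spec (j : ℤ) : j = rep n j + n * ((j - 1) / n) := by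
  have := Int.mul_ediv_add_emod (j - 1) n
  simp [rep]; omega

lemma rep_congr {j j' : ℤ} (h : (n:ℤ) ∣ (j - j')) : rep n j = rep n j' := by
  have : (j - 1) % n = (j' - 1) % n :=
    Int.emod_eq_emod_iff_emod_sub_eq_zero.2
      (Int.emod_eq_zero_of_dvd (by simpa using h))
  simp [rep, this]

lemma rep_eq_self {j : ℤ} (h : j ∈ Finset.Icc (1:ℤ) n) : rep n j = j := by
  simp at h
  have : (j - 1) % n = j - 1 := Int.emod_eq_of_lt (by omega) (by omega)
  simp [rep, this]

end IntSide


section IntSide2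
variable {n : ℕ}

/-- periodicity of a permutation of ℤ -/
def IsPer (n : ℕ) (u : Equiv.Perm ℤ) : Prop := ∀ j : ℤ, u (j + n) = u j + n

lemma IsPer.one : IsPer n 1 := fun _ => rfl

lemma IsPer.mul {u v : Equiv.Perm ℤ} (hu : IsPer n u) (hv : IsPer n v) : IsPer n (u * v) := by
  intro j
  simp only [Equiv.Perm.mul_apply, hv j, hu (v j)]

lemma IsPer.inv {u : Equiv.Perm ℤ} (hu : IsPer n u) : IsPer n u⁻¹ := by
  intro j
  apply u.injective
  rw [Equiv.Perm.apply_inv_self]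
  have : u (u⁻¹ j + n) = u (u⁻¹ j) + n := hu _
  rw [this, Equiv.Perm.apply_inv_self]

lemma IsPer.zsmul {u : Equiv.Perm ℤ} (hu : IsPer n u) (j : ℤ) (m : ℤ) :
    u (j + n * m) = u j + n * m := by
  induction m using Int.induction_on with
  | zero => simp
  | succ m ih =>
      have h1 : j + (n:ℤ) * ((m:ℤ)+1) = (j + n*m) + n := by ring
      rw [h1, hu, ih]; ring
  | pred m ih =>
      have h1 := hu (j + (n:ℤ)*(-(m:ℤ)-1))
      have h2 : j + (n:ℤ)*(-(m:ℤ)-1) + n = j + n * (-(m:ℤ)) := by ring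
      rw [h2, ih] at h1
      have h3 : u (j + (n:ℤ) * (-(m:ℤ)-1)) = u j + n * (-(m:ℤ)) - n := by linarith
      rw [h3]; ring

lemma IsPer.congr {u : Equiv.Perm ℤ} (hu : IsPer n u) {j j' : ℤ} (h : (n:ℤ) ∣ j - j') :
    u j = u j' + (j - j') := by
  obtain ⟨m, hm⟩ := h
  have hj : j = j' + n * m := by linarith
  rw [hj, hu.zsmul]; ring

lemma dvd_sub_rep (j : ℤ) : (n:ℤ) ∣ j - rep n j :=
  ⟨(j-1)/n, by linarith [rep_spec (n := n) j]⟩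

lemma IsPer.eq_rep_add {u : Equiv.Perm ℤ} (hu : IsPer n u) (x : ℤ) :
    u x = u (rep n x) + (x - rep n x) :=
  hu.congr (dvd_sub_rep x)

lemma rep_apply_rep {w : Equiv.Perm ℤ} (hw : IsPer n w) (x : ℤ) :
    rep n (w (rep n x)) = rep n (w x) := by
  have h1 : w (rep n x) = w x + (rep n x - x) :=
    hw.congr (by simpa [neg_sub] using dvd_neg.2 (dvd_sub_rep (n := n) x))
  rw [h1]
  exact rep_congr (by simpa [neg_sub] using dvd_neg.2 (dvd_sub_rep (n := n) x))

lemma sum_rep_comp (hn : 0 < n) {v : Equiv.Perm ℤ} (hv : IsPer n v)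
    {A : Type*} [AddCommMonoid A] (f : ℤ → A) :
    ∑ i ∈ Finset.Icc (1:ℤ) n, f (rep n (v i)) = ∑ i ∈ Finset.Icc (1:ℤ) n, f i := by
  refine Finset.sum_nbij' (fun i => rep n (v i)) (fun j => rep n (v⁻¹ j))
    (fun a _ => rep_mem hn _) (fun a _ => rep_mem hn _) ?_ ?_ (fun a _ => rfl)
  · intro a ha
    show rep n (v⁻¹ (rep n (v a))) = a
    rw [rep_apply_rep hv.inv, Equiv.Perm.inv_apply_self, rep_eq_self ha]
  · intro a ha
    show rep n (v (rep n (v⁻¹ a))) = a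
    rw [rep_apply_rep hv, Equiv.Perm.apply_inv_self, rep_eq_self ha]

/-- The set of affine permutations. -/
def HSet (n : ℕ) : Set (Equiv.Perm ℤ) := {u : Equiv.Perm ℤ |
    (∀ j : ℤ, u (j + n) = u j + n) ∧
    ∑ i ∈ Finset.Icc (1 : ℤ) (n : ℤ), u i = ((n + 1).choose 2 : ℤ)}

def Hgrp (n : ℕ) (hn : 0 < n) : Subgroup (Equiv.Perm ℤ) where
  carrier := HSet n
  one_mem' := ⟨IsPer.one, by simpa using gauss_int n⟩
  mul_mem' := by
    rintro a b ⟨ha1, ha2⟩ ⟨hb1, hb2⟩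
    refine ⟨IsPer.mul ha1 hb1, ?_⟩
    have h1 : ∀ i : ℤ, (a * b) i = a (rep n (b i)) + (b i - rep n (b i)) := fun i =>
      (IsPer.eq_rep_add ha1 (b i))
    rw [Finset.sum_congr rfl fun i _ => h1 i, Finset.sum_add_distrib, Finset.sum_sub_distrib,
      sum_rep_comp hn hb1 (fun x => a x), sum_rep_comp hn hb1 (fun x => x), ha2, hb2, gauss_int]
    ring
  inv_mem' := by
    rintro a ⟨ha1, ha2⟩
    refine ⟨IsPer.inv ha1, ?_⟩
    have h1 : ∀ i : ℤ, i = a (rep n (a⁻¹ i)) + (a⁻¹ i - rep n (a⁻¹ i)) := by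
      intro i
      have := IsPer.eq_rep_add ha1 (a⁻¹ i)
      rw [Equiv.Perm.apply_inv_self] at this
      exact this
    have h2 : ∑ i ∈ Finset.Icc (1:ℤ) n, i =
        ∑ i ∈ Finset.Icc (1:ℤ) n, (a (rep n (a⁻¹ i)) + (a⁻¹ i - rep n (a⁻¹ i))) :=
      Finset.sum_congr rfl fun i _ => h1 i
    rw [Finset.sum_add_distrib, Finset.sum_sub_distrib,
      sum_rep_comp hn (IsPer.inv ha1) (fun x => a x), sum_rep_comp hn (IsPer.inv ha1) (fun x => x),
      ha2, gauss_int] at h2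
    have := gauss_int n
    linarith

lemma Hgrp_coe (n : ℕ) (hn : 0 < n) : (Hgrp n hn : Set (Equiv.Perm ℤ)) = HSet n := rfl

end IntSide2


section ZSide
variable {n k : ℕ} [NeZero n] [NeZero (k*n)]

/-- reduction -/
noncomputable def pr (n k : ℕ) : ZMod (k*n) →+* ZMod n := ZMod.castHom (dvd_mul_left n k) (ZMod n)

/-- section -/
def io (n k : ℕ) (r : ZMod n) : ZMod (k*n) := (r.val : ZMod (k*n))

lemma pr_natCast (i : ℕ) : pr n k (i : ZMod (k*n)) = (i : ZMod n) := map_natCast _ i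

lemma pr_io (r : ZMod n) : pr n k (io n k r) = r := by
  rw [io, pr_natCast, ZMod.natCast_val, ZMod.cast_id]

def IsPerZ (n k : ℕ) (v : Equiv.Perm (ZMod (k*n))) : Prop :=
  ∀ x : ZMod (k*n), v (x + n) = v x + n

lemma IsPerZ.one : IsPerZ n k 1 := fun _ => rfl

lemma IsPerZ.mul {u v : Equiv.Perm (ZMod (k*n))} (hu : IsPerZ n k u) (hv : IsPerZ n k v) :
    IsPerZ n k (u * v) := by
  intro x
  simp only [Equiv.Perm.mul_apply, hv x, hu (v x)]

lemma IsPerZ.inv {u : Equiv.Perm (ZMod (k*n))} (hu : IsPerZ n k u) : IsPerZ n k u⁻¹ := by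
  intro x
  apply u.injective
  rw [Equiv.Perm.apply_inv_self]
  have : u (u⁻¹ x + n) = u (u⁻¹ x) + n := hu _
  rw [this, Equiv.Perm.apply_inv_self]

lemma IsPerZ.nsmul {v : Equiv.Perm (ZMod (k*n))} (hv : IsPerZ n k v) (x : ZMod (k*n)) (t : ℕ) :
    v (x + (n : ZMod (k*n)) * t) = v x + n * t := by
  induction t with
  | zero => simp
  | succ m ih =>
      have h1 : x + (n : ZMod (k*n)) * ((m:ZMod (k*n))+1) = (x + n*m) + n := by ring
      push_cast
      rw [h1, hv, ih]
      ring

lemma ker_form {z : ZMod (k*n)} (hz : pr n k z = 0) : ∃ t : ℕ, z = (n : ZMod (k*n)) * t := by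
  have hz' : ((z.val : ℕ) : ZMod n) = 0 := by
    rw [← pr_natCast (k := k), ZMod.natCast_val, ZMod.cast_id]
    exact hz
  obtain ⟨t, ht⟩ := (ZMod.natCast_eq_zero_iff _ _).1 hz'
  refine ⟨t, ?_⟩
  have : z = ((z.val : ℕ) : ZMod (k*n)) := by rw [ZMod.natCast_val, ZMod.cast_id]
  rw [this, ht]
  push_cast
  ring

lemma IsPerZ.congr {v : Equiv.Perm (ZMod (k*n))} (hv : IsPerZ n k v) {x y : ZMod (k*n)}
    (h : pr n k x = pr n k y) : v x = v y + (x - y) := by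
  obtain ⟨t, ht⟩ := ker_form (z := x - y) (by rw [map_sub, h, sub_self])
  have hx : x = y + (n : ZMod (k*n)) * t := by rw [← ht]; ring
  rw [hx, hv.nsmul, ← ht]
  ring

lemma IsPerZ.pi_congr {v : Equiv.Perm (ZMod (k*n))} (hv : IsPerZ n k v) {x y : ZMod (k*n)}
    (h : pr n k (v x) = pr n k (v y)) : pr n k x = pr n k y := by
  obtain ⟨t, ht⟩ := ker_form (z := v x - v y) (by rw [map_sub, h, sub_self])
  have h2 : v (y + (n : ZMod (k*n)) * t) = v x := by rw [hv.nsmul, ← ht]; ring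
  have h3 : y + (n : ZMod (k*n)) * t = x := v.injective h2
  rw [← h3, map_add]
  have : pr n k ((n : ZMod (k*n)) * t) = 0 := by
    rw [map_mul, pr_natCast, ZMod.natCast_self, zero_mul]
  rw [this, add_zero]

/-- induced permutation of residues -/
lemma vbar_bij {v : Equiv.Perm (ZMod (k*n))} (hv : IsPerZ n k v) :
    Function.Bijective (fun r : ZMod n => pr n k (v (io n k r))) := by
  rw [Finite.injective_iff_bijective.symm]
  intro r r' h
  have := hv.pi_congr (x := io n k r) (y := io n k r') h
  rwa [pr_io, pr_io] at this

/-- reindexing sums between `Icc 1 n` and `ZMod n` -/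
lemma sum_reindex {A : Type*} [AddCommMonoid A] (g : ZMod n → A) :
    ∑ i ∈ Finset.Icc (1:ℕ) n, g ((i : ZMod n)) = ∑ r : ZMod n, g r := by
  have hn : 0 < n := Nat.pos_of_ne_zero (NeZero.ne n)
  refine Finset.sum_nbij' (fun i => (i : ZMod n)) (fun r => if r.val = 0 then n else r.val)
    (fun a _ => Finset.mem_univ _) ?_ ?_ ?_ (fun a _ => rfl)
  · intro r _
    have := ZMod.val_lt r
    by_cases h : r.val = 0 <;> simp [h] <;> omega
  · intro i hi
    simp only [Finset.mem_Icc] at hi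
    show (if ((i : ZMod n)).val = 0 then n else ((i : ZMod n)).val) = i
    rw [ZMod.val_natCast]
    rcases Nat.lt_or_ge i n with h | h
    · rw [Nat.mod_eq_of_lt h, if_neg (by omega)]
    · have hin : i = n := by omega
      subst hin
      rw [Nat.mod_self, if_pos rfl]
  · intro r _
    show ((if r.val = 0 then n else r.val : ℕ) : ZMod n) = r
    by_cases h : r.val = 0
    · rw [if_pos h, ZMod.natCast_self]
      exact ((ZMod.val_eq_zero r).1 h).symm
    · rw [if_neg h, ZMod.natCast_val, ZMod.cast_id]

end ZSide

section ZSide2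
variable {n k : ℕ} [NeZero n] [NeZero (k*n)]

lemma sum_diff_io :
    ∑ i ∈ Finset.Icc (1:ℕ) n, ((i : ZMod (k*n)) - io n k ((i : ZMod n))) = (n : ZMod (k*n)) := by
  have key : ∀ i ∈ Finset.Icc 1 n,
      ((i : ZMod (k*n)) - io n k ((i : ZMod n))) = if i = n then (n : ZMod (k*n)) else 0 := by
    intro i hi
    simp only [Finset.mem_Icc] at hi
    have hio : io n k ((i : ZMod n)) = ((i % n : ℕ) : ZMod (k*n)) := by
      rw [io, ZMod.val_natCast]
    rcases eq_or_ne i n with h | h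
    · subst h
      rw [if_pos rfl, ZMod.natCast_self,
        show io i k (0 : ZMod i) = 0 by rw [io, ZMod.val_zero, Nat.cast_zero], sub_zero]
    · rw [hio, Nat.mod_eq_of_lt (by omega), if_neg h, sub_self]
  rw [Finset.sum_congr rfl key,
    Finset.sum_eq_single_of_mem n (by simp [Nat.one_le_iff_ne_zero.2 (NeZero.ne n)])
      (fun b _ hb => if_neg hb), if_pos rfl]

lemma sum_Icc_perZ {v : Equiv.Perm (ZMod (k*n))} (hv : IsPerZ n k v) :
    ∑ i ∈ Finset.Icc (1:ℕ) n, v (i : ZMod (k*n)) =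
      (∑ r : ZMod n, v (io n k r)) + n := by
  have h1 : ∀ i : ℕ, v ((i : ZMod (k*n))) =
      v (io n k ((i : ZMod n))) + ((i : ZMod (k*n)) - io n k ((i : ZMod n))) := fun i =>
    hv.congr (by rw [pr_io, pr_natCast])
  rw [Finset.sum_congr rfl fun i _ => h1 i, Finset.sum_add_distrib,
    sum_reindex (fun r => v (io n k r)), sum_diff_io]

lemma sum_Icc_cast :
    ∑ i ∈ Finset.Icc (1:ℕ) n, ((i:ℕ) : ZMod (k*n)) = (((n+1).choose 2 : ℕ) : ZMod (k*n)) := by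
  rw [← Nat.cast_sum, gauss_nat]

lemma sum_io_eq :
    ∑ r : ZMod n, io n k r = (((n+1).choose 2 : ℕ) : ZMod (k*n)) - n := by
  have h := sum_Icc_perZ (n := n) (k := k) (v := 1) IsPerZ.one
  simp only [Equiv.Perm.coe_one, id_eq] at h
  rw [sum_Icc_cast] at h
  linear_combination -h

/-- The set of affine permutations of ZMod (k*n). -/
def HkSet (n k : ℕ) : Set (Equiv.Perm (ZMod (k * n))) := {v : Equiv.Perm (ZMod (k * n)) |
    (∀ j : ZMod (k * n), v (j + n) = v j + n) ∧
    ∑ i ∈ Finset.Icc (1 : ℕ) n, v (i : ZMod (k * n)) =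
      (((n + 1).choose 2 : ℕ) : ZMod (k * n))}

lemma mem_HkSet_iff {v : Equiv.Perm (ZMod (k*n))} :
    v ∈ HkSet n k ↔ IsPerZ n k v ∧
      ∑ r : ZMod n, v (io n k r) = (((n + 1).choose 2 : ℕ) : ZMod (k * n)) - n := by
  constructor
  · rintro ⟨h1, h2⟩
    refine ⟨h1, ?_⟩
    rw [sum_Icc_perZ h1] at h2
    linear_combination h2
  · rintro ⟨h1, h2⟩
    refine ⟨h1, ?_⟩
    rw [sum_Icc_perZ h1, h2]
    ring

def Hkgrp (n k : ℕ) [NeZero n] [NeZero (k*n)] : Subgroup (Equiv.Perm (ZMod (k*n))) where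
  carrier := HkSet n k
  one_mem' := mem_HkSet_iff.2 ⟨IsPerZ.one, by simpa using sum_io_eq⟩
  mul_mem' := by
    intro a b ha hb
    obtain ⟨ha1, ha2⟩ := mem_HkSet_iff.1 ha
    obtain ⟨hb1, hb2⟩ := mem_HkSet_iff.1 hb
    refine mem_HkSet_iff.2 ⟨ha1.mul hb1, ?_⟩
    have key : ∀ r : ZMod n, (a * b) (io n k r) =
        a (io n k (pr n k (b (io n k r)))) + (b (io n k r) - io n k (pr n k (b (io n k r)))) := by
      intro r
      exact ha1.congr (by rw [pr_io])
    rw [Finset.sum_congr rfl fun r _ => key r, Finset.sum_add_distrib, Finset.sum_sub_distrib]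
    rw [(vbar_bij hb1).sum_comp (fun r => a (io n k r)),
      (vbar_bij hb1).sum_comp (fun r => io n k r)]
    rw [ha2, hb2, sum_io_eq]
    ring
  inv_mem' := by
    intro a ha
    obtain ⟨ha1, ha2⟩ := mem_HkSet_iff.1 ha
    refine mem_HkSet_iff.2 ⟨ha1.inv, ?_⟩
    have key : ∀ r : ZMod n, io n k r =
        a (io n k (pr n k (a⁻¹ (io n k r)))) +
          (a⁻¹ (io n k r) - io n k (pr n k (a⁻¹ (io n k r)))) := by
      intro r
      have h := ha1.congr (x := a⁻¹ (io n k r)) (y := io n k (pr n k (a⁻¹ (io n k r))))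
        (by rw [pr_io])
      rw [Equiv.Perm.apply_inv_self] at h
      exact h
    have hsum := Finset.sum_congr rfl fun r (_ : r ∈ Finset.univ) => key r
    rw [Finset.sum_add_distrib, Finset.sum_sub_distrib,
      (vbar_bij ha1.inv).sum_comp (fun r => a (io n k r)),
      (vbar_bij ha1.inv).sum_comp (fun r => io n k r), ha2] at hsum
    linear_combination 2 * sum_io_eq (n := n) (k := k) - hsum

lemma Hkgrp_coe : (Hkgrp n k : Set (Equiv.Perm (ZMod (k*n)))) = HkSet n k := rfl

end ZSide2


section Red
variable {n k : ℕ} [NeZero n] [NeZero (k*n)]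





def redFun (n k : ℕ) [NeZero (k*n)] (u : Equiv.Perm ℤ) : ZMod (k*n) → ZMod (k*n) :=
  fun x => ((u ((x.val : ℤ)) : ℤ) : ZMod (k*n))

lemma red_congr {u : Equiv.Perm ℤ} (hu : IsPer n u) {j j' : ℤ}
    (h : ((j : ZMod (k*n)) = (j' : ZMod (k*n)))) :
    ((u j : ℤ) : ZMod (k*n)) = ((u j' : ℤ) : ZMod (k*n)) := by
  have hd : ((k*n : ℕ) : ℤ) ∣ j - j' := by
    have := (ZMod.intCast_eq_intCast_iff _ _ _).1 h
    exact Int.ModEq.dvd this.symm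
  have hdn : (n : ℤ) ∣ j - j' := dvd_trans (by push_cast; exact dvd_mul_left _ _) hd
  rw [hu.congr hdn]
  push_cast
  have : ((j - j' : ℤ) : ZMod (k*n)) = 0 := by
    rw [ZMod.intCast_zmod_eq_zero_iff_dvd]
    exact_mod_cast hd
  push_cast at this
  linear_combination this

lemma cast_val_intCast (x : ZMod (k*n)) : (((x.val : ℤ)) : ZMod (k*n)) = x := by
  push_cast
  rw [ZMod.natCast_val, ZMod.cast_id]

lemma redFun_intCast {u : Equiv.Perm ℤ} (hu : IsPer n u) (j : ℤ) :
    redFun n k u ((j : ZMod (k*n))) = ((u j : ℤ) : ZMod (k*n)) := by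
  rw [redFun]
  exact red_congr hu (by rw [cast_val_intCast])

lemma redFun_redFun {u v : Equiv.Perm ℤ} (hu : IsPer n u) (x : ZMod (k*n)) :
    redFun n k u (redFun n k v x) = ((u (v (x.val : ℤ)) : ℤ) : ZMod (k*n)) := by
  show redFun n k u (((v ((x.val : ℤ)) : ℤ) : ZMod (k*n))) = _
  rw [redFun_intCast hu]

def redPerm (n k : ℕ) [NeZero n] [NeZero (k*n)] (u : Equiv.Perm ℤ) (hu : IsPer n u) :
    Equiv.Perm (ZMod (k*n)) where
  toFun := redFun n k u
  invFun := redFun n k u⁻¹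
  left_inv := by
    intro x
    rw [redFun_redFun hu.inv, Equiv.Perm.inv_apply_self, cast_val_intCast]
  right_inv := by
    intro x
    rw [redFun_redFun hu, Equiv.Perm.apply_inv_self, cast_val_intCast]

lemma redPerm_apply (u : Equiv.Perm ℤ) (hu : IsPer n u) (x : ZMod (k*n)) :
    redPerm n k u hu x = ((u (x.val : ℤ) : ℤ) : ZMod (k*n)) := rfl

lemma redPerm_intCast (u : Equiv.Perm ℤ) (hu : IsPer n u) (j : ℤ) :
    redPerm n k u hu ((j : ZMod (k*n))) = ((u j : ℤ) : ZMod (k*n)) := redFun_intCast hu j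

end Red

section Hom
variable {n k : ℕ} [NeZero n] [NeZero (k*n)]

lemma mem_H_iff (hn : 0 < n) {u : Equiv.Perm ℤ} : u ∈ Hgrp n hn ↔ IsPer n u ∧
    ∑ i ∈ Finset.Icc (1 : ℤ) (n : ℤ), u i = ((n + 1).choose 2 : ℤ) := Iff.rfl

noncomputable def redHom (n k : ℕ) [NeZero n] [NeZero (k*n)] (hn : 0 < n) :
    Hgrp n hn →* Equiv.Perm (ZMod (k*n)) :=
  MonoidHom.mk' (fun u => redPerm n k u.1 ((mem_H_iff hn).1 u.2).1) (by
    intro a b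
    ext x
    show redFun n k (a.1 * b.1) x = redFun n k a.1 (redFun n k b.1 x)
    rw [redFun_redFun ((mem_H_iff hn).1 a.2).1]
    rfl)

lemma redHom_intCast (hn : 0 < n) (u : Hgrp n hn) (j : ℤ) :
    redHom n k hn u ((j : ZMod (k*n))) = ((u.1 j : ℤ) : ZMod (k*n)) :=
  redPerm_intCast _ ((mem_H_iff hn).1 u.2).1 j

lemma redHom_mem_Hk (hn : 0 < n) (u : Hgrp n hn) : redHom n k hn u ∈ Hkgrp n k := by
  obtain ⟨hu1, hu2⟩ := (mem_H_iff hn).1 u.2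
  constructor
  · intro x
    have hx : x + (n : ZMod (k*n)) = (((x.val : ℤ) + n : ℤ) : ZMod (k*n)) := by
      push_cast
      rw [ZMod.natCast_val, ZMod.cast_id]
    have hx2 : redHom n k hn u x = ((u.1 (x.val : ℤ) : ℤ) : ZMod (k*n)) := rfl
    rw [hx, redHom_intCast hn u, hu1, hx2]
    push_cast
    ring
  · show ∑ i ∈ Finset.Icc (1 : ℕ) n, redHom n k hn u ((i : ZMod (k*n))) = _
    have h1 : ∀ i : ℕ, redHom n k hn u ((i : ZMod (k*n))) = ((u.1 (i:ℤ) : ℤ) : ZMod (k*n)) := by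
      intro i
      have : ((i:ℕ) : ZMod (k*n)) = (((i:ℕ):ℤ) : ZMod (k*n)) := by push_cast; ring
      rw [this, redHom_intCast hn u]
    rw [Finset.sum_congr rfl fun i _ => h1 i, ← Int.cast_sum, ← sum_Icc_int_eq n (fun j => u.1 j),
      hu2]
    push_cast
    ring

end Hom

section Lift
variable {n k : ℕ} [NeZero n] [NeZero (k*n)]

lemma pr_val (y : ZMod (k*n)) : pr n k y = ((y.val : ℕ) : ZMod n) := by
  rw [← pr_natCast (n := n) (k := k) y.val, ZMod.natCast_val, ZMod.cast_id]

lemma val_intCast_int (j : ℤ) : (((j : ZMod n)).val : ℤ) = j % n := by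
  rw [ZMod.val_intCast]

lemma io_intCast (j : ℤ) : io n k ((j : ZMod n)) = ((j % n : ℤ) : ZMod (k*n)) := by
  rw [io]
  rw [show (((j : ZMod n)).val : ZMod (k*n)) = ((((j : ZMod n)).val : ℤ) : ZMod (k*n)) by
    push_cast; ring, val_intCast_int]

noncomputable def liftD (n k : ℕ) [NeZero n] [NeZero (k*n)] (v : Equiv.Perm (ZMod (k*n))) : ℤ :=
  (∑ r : ZMod n, ((v (io n k r)).val : ℤ)) - ((n+1).choose 2 : ℤ) + n

lemma liftD_dvd {v : Equiv.Perm (ZMod (k*n))} (hv : v ∈ HkSet n k) :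
    ((k*n : ℕ) : ℤ) ∣ liftD n k v := by
  rw [← ZMod.intCast_zmod_eq_zero_iff_dvd]
  obtain ⟨hv1, hv2⟩ := mem_HkSet_iff.1 hv
  have hc : ∀ r : ZMod n, ((((v (io n k r)).val : ℕ)) : ZMod (k*n)) = v (io n k r) := by
    intro r
    rw [ZMod.natCast_val, ZMod.cast_id]
  rw [liftD]
  push_cast
  rw [Finset.sum_congr rfl fun r _ => hc r, hv2]
  push_cast
  ring

noncomputable def liftA (n k : ℕ) [NeZero n] [NeZero (k*n)] (v : Equiv.Perm (ZMod (k*n))) :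
    ZMod n → ℤ :=
  fun r => ((v (io n k r)).val : ℤ) - (if r = 0 then liftD n k v else 0)

lemma liftA_castN {v : Equiv.Perm (ZMod (k*n))} (hv : v ∈ HkSet n k) (r : ZMod n) :
    ((liftA n k v r : ℤ) : ZMod (k*n)) = v (io n k r) := by
  have h0 : ((liftD n k v : ℤ) : ZMod (k*n)) = 0 := by
    rw [ZMod.intCast_zmod_eq_zero_iff_dvd]
    exact_mod_cast liftD_dvd hv
  rw [liftA]
  split_ifs with h <;> push_cast [h0] <;> rw [ZMod.natCast_val, ZMod.cast_id] <;> ring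

lemma liftA_castn {v : Equiv.Perm (ZMod (k*n))} (hv : v ∈ HkSet n k) (r : ZMod n) :
    ((liftA n k v r : ℤ) : ZMod n) = pr n k (v (io n k r)) := by
  have h0 : ((liftD n k v : ℤ) : ZMod n) = 0 := by
    rw [ZMod.intCast_zmod_eq_zero_iff_dvd]
    exact dvd_trans (by push_cast; exact dvd_mul_left _ _) (liftD_dvd hv)
  rw [liftA, pr_val]
  split_ifs with h <;> push_cast [h0] <;> ring

lemma liftA_sum {v : Equiv.Perm (ZMod (k*n))} (hv : v ∈ HkSet n k) :
    ∑ r : ZMod n, liftA n k v r = ((n+1).choose 2 : ℤ) - n := by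
  rw [show (fun r => liftA n k v r) = liftA n k v from rfl]
  unfold liftA
  rw [Finset.sum_sub_distrib,
    Finset.sum_eq_single_of_mem 0 (Finset.mem_univ _) (fun b _ hb => if_neg hb), if_pos rfl,
    liftD]
  ring

noncomputable def liftFun (n k : ℕ) [NeZero n] [NeZero (k*n)] (v : Equiv.Perm (ZMod (k*n))) : ℤ → ℤ :=
  fun j => liftA n k v ((j : ZMod n)) + n * (j / n)

lemma liftFun_cast {v : Equiv.Perm (ZMod (k*n))} (hv : v ∈ HkSet n k) (j : ℤ) :
    ((liftFun n k v j : ℤ) : ZMod (k*n)) = v ((j : ZMod (k*n))) := by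
  obtain ⟨hv1', hv2⟩ := mem_HkSet_iff.1 hv
  have h1 : v ((j : ZMod (k*n))) = v (io n k ((j : ZMod n)))
      + ((j : ZMod (k*n)) - io n k ((j : ZMod n))) := by
    refine hv1'.congr ?_
    rw [pr_io, map_intCast]
  rw [liftFun]
  push_cast
  rw [liftA_castN hv, h1, io_intCast]
  have hz : (n:ℤ) * (j / n) = j - j % n := by
    have := Int.mul_ediv_add_emod j n
    linarith
  have hzc := congrArg (Int.cast : ℤ → ZMod (k*n)) hz
  push_cast at hzc
  linear_combination hzc

lemma natCast_int_ne_zero : (n : ℤ) ≠ 0 := Int.natCast_ne_zero.mpr (NeZero.ne n)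

lemma liftFun_per (v : Equiv.Perm (ZMod (k*n))) (j : ℤ) :
    liftFun n k v (j + n) = liftFun n k v j + n := by
  simp only [liftFun]
  have h1 : ((j + n : ℤ) : ZMod n) = (j : ZMod n) := by push_cast; simp
  have h2 : (j + n)/n = j/n + 1 := by
    rw [show j + (n:ℤ) = j + 1 * n by ring, Int.add_mul_ediv_right _ _ natCast_int_ne_zero]
  rw [h1, h2]
  ring

lemma liftFun_bij {v : Equiv.Perm (ZMod (k*n))} (hv : v ∈ HkSet n k) :
    Function.Bijective (liftFun n k v) := by
  have hv1 := (mem_HkSet_iff.1 hv).1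
  constructor
  · intro a b hab
    simp only [liftFun] at hab
    have hres : pr n k (v (io n k ((a : ZMod n)))) = pr n k (v (io n k ((b : ZMod n)))) := by
      have hc := congrArg (Int.cast : ℤ → ZMod n) hab
      push_cast at hc
      simp only [ZMod.natCast_self, zero_mul, add_zero] at hc
      rw [liftA_castn hv, liftA_castn hv] at hc
      exact hc
    have hres2 : ((a : ZMod n)) = ((b : ZMod n)) := (vbar_bij hv1).1 hres
    have hmod : a % n = b % n := by
      rw [← val_intCast_int (n := n) a, ← val_intCast_int (n := n) b, hres2]
    have hA : liftA n k v ((a : ZMod n)) = liftA n k v ((b : ZMod n)) := by rw [hres2]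
    have hdiv : a / n = b / n := by
      have hmul : (n:ℤ) * (a/n) = (n:ℤ) * (b/n) := by linarith [hab, hA]
      exact mul_left_cancel₀ natCast_int_ne_zero hmul
    have ha' := Int.mul_ediv_add_emod a n
    have hb' := Int.mul_ediv_add_emod b n
    rw [hdiv, hmod] at ha'
    linarith
  · intro m
    obtain ⟨r, hr⟩ := (vbar_bij hv1).2 ((m : ZMod n))
    simp only at hr
    have hdvd : (n:ℤ) ∣ m - liftA n k v r := by
      rw [← ZMod.intCast_zmod_eq_zero_iff_dvd]
      push_cast
      rw [liftA_castn hv, hr]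
      ring
    refine ⟨(r.val : ℤ) + n * ((m - liftA n k v r)/n), ?_⟩
    have hj1 : (((r.val : ℤ) + n * ((m - liftA n k v r)/n) : ℤ) : ZMod n) = r := by
      push_cast
      simp [ZMod.natCast_val, ZMod.cast_id]
    have hj2 : ((r.val : ℤ) + n * ((m - liftA n k v r)/n)) / n = (m - liftA n k v r)/n := by
      rw [Int.add_mul_ediv_left _ _ natCast_int_ne_zero,
        Int.ediv_eq_zero_of_lt (by positivity) (by exact_mod_cast ZMod.val_lt r), zero_add]
    simp only [liftFun]
    rw [hj1, hj2, Int.mul_ediv_cancel' hdvd]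
    ring

lemma liftFun_sum {v : Equiv.Perm (ZMod (k*n))} (hv : v ∈ HkSet n k) :
    ∑ i ∈ Finset.Icc (1:ℤ) (n:ℤ), liftFun n k v i = ((n+1).choose 2 : ℤ) := by
  have hn : 0 < n := Nat.pos_of_ne_zero (NeZero.ne n)
  simp only [liftFun]
  rw [Finset.sum_add_distrib]
  have h1 : ∑ i ∈ Finset.Icc (1:ℤ) (n:ℤ), liftA n k v ((i : ZMod n))
      = ∑ r : ZMod n, liftA n k v r := by
    rw [sum_Icc_int_eq n (fun i => liftA n k v ((i : ZMod n)))]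
    have hcast : ∀ i : ℕ, liftA n k v ((((i:ℕ):ℤ) : ZMod n)) = liftA n k v ((i : ZMod n)) := by
      intro i
      norm_cast
    rw [Finset.sum_congr rfl fun i _ => hcast i, sum_reindex (liftA n k v)]
  have h2 : ∑ i ∈ Finset.Icc (1:ℤ) (n:ℤ), (n:ℤ) * (i/n) = n := by
    rw [Finset.sum_eq_single_of_mem (n:ℤ)
      (by simp; exact_mod_cast hn)
      (fun b hb hbn => by
        simp only [Finset.mem_Icc] at hb
        rw [Int.ediv_eq_zero_of_lt (by omega) (by
          rcases lt_or_ge b (n:ℤ) with h | h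
          · exact h
          · exfalso; exact hbn (by omega)), mul_zero])]
    rw [Int.ediv_self natCast_int_ne_zero, mul_one]
  rw [h1, h2, liftA_sum hv]
  ring

noncomputable def liftPerm (v : Equiv.Perm (ZMod (k*n))) (hv : v ∈ HkSet n k) : Equiv.Perm ℤ :=
  Equiv.ofBijective _ (liftFun_bij hv)

lemma liftPerm_mem (hn : 0 < n) {v : Equiv.Perm (ZMod (k*n))} (hv : v ∈ HkSet n k) :
    liftPerm v hv ∈ Hgrp n hn :=
  (mem_H_iff hn).2 ⟨fun j => liftFun_per v j, liftFun_sum hv⟩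

lemma redHom_liftPerm (hn : 0 < n) {v : Equiv.Perm (ZMod (k*n))} (hv : v ∈ HkSet n k) :
    redHom n k hn ⟨liftPerm v hv, liftPerm_mem hn hv⟩ = v := by
  ext x
  show ((liftFun n k v ((x.val : ℤ)) : ℤ) : ZMod (k*n)) = v x
  rw [liftFun_cast hv, cast_val_intCast]

lemma redHom_range (hn : 0 < n) : (redHom n k hn).range = Hkgrp n k := by
  ext v
  constructor
  · rintro ⟨u, rfl⟩
    exact redHom_mem_Hk hn u
  · intro hv
    exact ⟨⟨liftPerm v hv, liftPerm_mem hn hv⟩, redHom_liftPerm hn hv⟩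

end Lift

/-- The standard generating family. -/
def stdGens' (n : ℕ) (s : Fin n → Equiv.Perm ℤ) : Prop :=
  ∀ i : Fin n, ∀ j : ℤ,
    s i j = if (j : ZMod n) = ((i : ℕ) : ZMod n) then j + 1
      else if (j : ZMod n) = ((i : ℕ) : ZMod n) + 1 then j - 1 else j

section Ker
variable {n k : ℕ} [NeZero n] [NeZero (k*n)]

/-- window index -/
def wq (n : ℕ) (i : Fin n) (m : ℤ) : ℤ := (m - (i:ℕ) - 1) / n

lemma ediv_succ_eq (A : ℤ) (h : ¬ ((n:ℤ) ∣ A + 1)) : (A + 1)/(n:ℤ) = A/n := by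
  have hn0 := natCast_int_ne_zero (n := n)
  have hpos : (0:ℤ) < n := lt_of_le_of_ne (Int.natCast_nonneg n) (Ne.symm hn0)
  have h1 := Int.mul_ediv_add_emod A n
  have h2 := Int.emod_nonneg A hn0
  have h3 := Int.emod_lt_of_pos A hpos
  have h4 : A % (n:ℤ) + 1 < n := by
    rcases lt_or_ge (A % (n:ℤ) + 1) n with h' | h'
    · exact h'
    · exfalso
      apply h
      refine ⟨A/n + 1, ?_⟩
      have h5 : A % (n:ℤ) = n - 1 := by omega
      linear_combination h1.symm + h5
  rw [show A + 1 = (A % (n:ℤ) + 1) + (n:ℤ) * (A / n) by linarith,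
    Int.add_mul_ediv_left _ _ hn0, Int.ediv_eq_zero_of_lt (by omega) h4, zero_add]

lemma gen_preserves {s : Fin n → Equiv.Perm ℤ} (hs : stdGens' n s) {i j : Fin n} (hj : j ≠ i)
    (m : ℤ) : wq n i (s j m) = wq n i m := by
  have hfin : ((j:ℕ) : ZMod n) ≠ ((i:ℕ) : ZMod n) := by
    intro hcontra
    apply hj
    have hv := congrArg ZMod.val hcontra
    rw [ZMod.val_cast_of_lt j.isLt, ZMod.val_cast_of_lt i.isLt] at hv
    exact Fin.ext hv
  rw [hs j m]
  split_ifs with h1 h2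
  · rw [wq, wq, show m + 1 - ((i:ℕ):ℤ) - 1 = (m - (i:ℕ) - 1) + 1 by ring]
    apply ediv_succ_eq
    intro hd
    rw [show m - ((i:ℕ):ℤ) - 1 + 1 = m - (i:ℕ) by ring] at hd
    have hz : ((m - ((i:ℕ):ℤ) : ℤ) : ZMod n) = 0 := by
      rw [ZMod.intCast_zmod_eq_zero_iff_dvd]
      exact hd
    push_cast at hz
    apply hfin
    rw [← h1]
    linear_combination hz
  · rw [wq, wq, show m - 1 - ((i:ℕ):ℤ) - 1 = (m - (i:ℕ) - 2) by ring,
      show m - ((i:ℕ):ℤ) - 1 = (m - (i:ℕ) - 2) + 1 by ring]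
    refine (ediv_succ_eq _ ?_).symm
    intro hd
    rw [show m - ((i:ℕ):ℤ) - 2 + 1 = m - ((i:ℕ):ℤ) - 1 by ring] at hd
    have hz : ((m - ((i:ℕ):ℤ) - 1 : ℤ) : ZMod n) = 0 := by
      rw [ZMod.intCast_zmod_eq_zero_iff_dvd]
      exact hd
    push_cast at hz
    apply hfin
    rw [show ((j:ℕ) : ZMod n) = (m : ZMod n) - 1 by linear_combination -h2]
    linear_combination hz
  · rfl

lemma closure_preserves {s : Fin n → Equiv.Perm ℤ} (hs : stdGens' n s) (i : Fin n)
    {u : Equiv.Perm ℤ} (hu : u ∈ Subgroup.closure (s '' {l | l ≠ i})) (m : ℤ) :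
    wq n i (u m) = wq n i m := by
  revert m
  refine Subgroup.closure_induction (p := fun g _ => ∀ m, wq n i (g m) = wq n i m)
    ?_ ?_ ?_ ?_ hu
  · rintro x ⟨j, hj, rfl⟩ m
    exact gen_preserves hs hj m
  · intro m
    rfl
  · intro a b _ _ ha hb m
    show wq n i (a (b m)) = wq n i m
    rw [ha, hb]
  · intro a _ ha m
    have h := ha (a⁻¹ m)
    rw [Equiv.Perm.apply_inv_self] at h
    exact h.symm

lemma ker_parab_eq_one (hk : k ≠ 0) {s : Fin n → Equiv.Perm ℤ} (hs : stdGens' n s) (i : Fin n)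
    {u : Equiv.Perm ℤ} (hu1 : ∀ m : ℤ, ((u m : ℤ) : ZMod (k*n)) = (m : ZMod (k*n)))
    (hu2 : u ∈ Subgroup.closure (s '' {l | l ≠ i})) : u = 1 := by
  ext m
  show u m = m
  have hd : ((k*n:ℕ):ℤ) ∣ u m - m := by
    rw [← ZMod.intCast_zmod_eq_zero_iff_dvd]
    push_cast
    rw [hu1 m]
    ring
  obtain ⟨t, ht⟩ := hd
  have hw := closure_preserves hs i hu2 m
  rw [show u m = m + (n:ℤ) * ((k:ℤ) * t) by push_cast at ht ⊢; linarith] at hw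
  rw [wq, wq, show m + (n:ℤ)*((k:ℤ)*t) - ((i:ℕ):ℤ) - 1 = (m - (i:ℕ) - 1) + (n:ℤ)*((k:ℤ)*t)
    by ring, Int.add_mul_ediv_left _ _ natCast_int_ne_zero] at hw
  have hkt : (k:ℤ) * t = 0 := by linarith
  have ht0 : t = 0 := by
    rcases mul_eq_zero.1 hkt with h | h
    · exact absurd h (by exact_mod_cast hk)
    · exact h
  rw [ht0, mul_zero] at ht
  linarith

end Ker

section Count
variable {n k : ℕ} [NeZero n] [NeZero (k*n)]

lemma npos : 0 < n := Nat.pos_of_ne_zero (NeZero.ne n)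
lemma kpos (hk : k ≠ 0) : 0 < k := Nat.pos_of_ne_zero hk

noncomputable def kerEquiv (hk : k ≠ 0) : ZMod k ≃ {z : ZMod (k*n) // pr n k z = 0} := by
  haveI : NeZero k := ⟨hk⟩
  exact {
    toFun := fun t => ⟨((n * t.val : ℕ) : ZMod (k*n)), by
      rw [pr_natCast]
      push_cast
      simp [ZMod.natCast_self]⟩
    invFun := fun z => ((z.1.val / n : ℕ) : ZMod k)
    left_inv := fun t => by
      have htv : t.val < k := ZMod.val_lt t
      have hlt : n * t.val < k * n := by
        calc n * t.val < n * k := mul_lt_mul_of_pos_left htv npos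
          _ = k * n := Nat.mul_comm n k
      have h1 : ((n * t.val : ℕ) : ZMod (k*n)).val = n * t.val := ZMod.val_cast_of_lt hlt
      simp only [h1]
      rw [Nat.mul_div_cancel_left _ npos, ZMod.natCast_val, ZMod.cast_id]
    right_inv := fun z => by
      obtain ⟨z, hz⟩ := z
      have hdvd : n ∣ z.val := by
        have h0 : ((z.val : ℕ) : ZMod n) = 0 := by rw [← pr_val]; exact hz
        exact (ZMod.natCast_eq_zero_iff _ _).1 h0
      obtain ⟨c, hc⟩ := hdvd
      have hck : c < k := by
        have hzl : z.val < k * n := ZMod.val_lt z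
        rw [hc, Nat.mul_comm k n] at hzl
        exact Nat.lt_of_mul_lt_mul_left hzl
      apply Subtype.ext
      show ((n * (((z.val / n : ℕ) : ZMod k)).val : ℕ) : ZMod (k*n)) = z
      rw [hc, Nat.mul_div_cancel_left _ npos, ZMod.val_cast_of_lt hck, ← hc,
        ZMod.natCast_val, ZMod.cast_id] }

lemma sum_split_zero {A : Type*} [AddCommMonoid A] (f : ZMod n → A) :
    ∑ r : ZMod n, f r = f 0 + ∑ t : {r : ZMod n // r ≠ 0}, f t.1 := by
  rw [← Finset.sum_erase_add Finset.univ f (Finset.mem_univ 0), add_comm]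
  congr 1
  exact Finset.sum_subtype _ (fun x => by simp) f

/-- zero-sum tuples valued in the kernel -/
def ZS (n k : ℕ) [NeZero n] [NeZero (k*n)] : Type :=
  {d : ZMod n → {z : ZMod (k*n) // pr n k z = 0} // ∑ r : ZMod n, (d r).1 = 0}

noncomputable def zsEquiv : ZS n k ≃ ({r : ZMod n // r ≠ 0} → {z : ZMod (k*n) // pr n k z = 0}) where
  toFun d t := d.1 t.1
  invFun g := ⟨fun r => if h : r = 0 then
      ⟨-∑ t : {r : ZMod n // r ≠ 0}, ((g t).1 : ZMod (k*n)), by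
        rw [map_neg, map_sum]
        simp only [fun t : {r : ZMod n // r ≠ 0} => (g t).2]
        simp⟩
    else g ⟨r, h⟩, by
      rw [sum_split_zero (f := fun r => ((if h : r = 0 then
        ⟨-∑ t : {r : ZMod n // r ≠ 0}, ((g t).1 : ZMod (k*n)), by
          rw [map_neg, map_sum]
          simp only [fun t : {r : ZMod n // r ≠ 0} => (g t).2]
          simp⟩
        else g ⟨r, h⟩ : {z : ZMod (k*n) // pr n k z = 0})).1)]
      rw [dif_pos rfl]
      have : ∀ t : {r : ZMod n // r ≠ 0},
          ((if h : t.1 = 0 then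
            ⟨-∑ t : {r : ZMod n // r ≠ 0}, ((g t).1 : ZMod (k*n)), by
              rw [map_neg, map_sum]
              simp only [fun t : {r : ZMod n // r ≠ 0} => (g t).2]
              simp⟩
          else g ⟨t.1, h⟩ : {z : ZMod (k*n) // pr n k z = 0})).1 = (g t).1 := by
        intro t
        rw [dif_neg t.2]
      rw [Finset.sum_congr rfl fun t _ => this t]
      ring⟩
  left_inv d := by
    apply Subtype.ext
    funext r
    dsimp only
    by_cases h : r = 0
    · subst h
      rw [dif_pos rfl]
      apply Subtype.ext
      show -∑ t : {r : ZMod n // r ≠ 0}, ((d.1 t.1).1 : ZMod (k*n)) = (d.1 0).1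
      have hd := d.2
      rw [sum_split_zero (f := fun r => (d.1 r).1)] at hd
      linear_combination -hd
    · simp only [dif_neg h]
  right_inv g := by
    funext t
    dsimp only
    rw [dif_neg t.2]

end Count

section Count2
variable {n k : ℕ} [NeZero n] [NeZero (k*n)]

lemma pr_add_n (x : ZMod (k*n)) : pr n k (x + n) = pr n k x := by
  rw [map_add, pr_natCast, ZMod.natCast_self, add_zero]

noncomputable def buildFun (σ : Equiv.Perm (ZMod n)) (d : ZMod n → ZMod (k*n)) : ZMod (k*n) → ZMod (k*n) :=
  fun x => io n k (σ (pr n k x)) + d (pr n k x) + (x - io n k (pr n k x))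

lemma buildFun_pr (σ : Equiv.Perm (ZMod n)) (d : ZMod n → ZMod (k*n))
    (hd : ∀ r, pr n k (d r) = 0) (x : ZMod (k*n)) :
    pr n k (buildFun σ d x) = σ (pr n k x) := by
  simp only [buildFun]
  rw [map_add, map_add, map_sub, pr_io, pr_io, hd]
  ring

lemma buildFun_bij (σ : Equiv.Perm (ZMod n)) (d : ZMod n → ZMod (k*n))
    (hd : ∀ r, pr n k (d r) = 0) : Function.Bijective (buildFun (n:=n) (k:=k) σ d) := by
  constructor
  · intro x y hxy
    have hpr : σ (pr n k x) = σ (pr n k y) := by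
      rw [← buildFun_pr σ d hd x, ← buildFun_pr σ d hd y, hxy]
    have hpr2 : pr n k x = pr n k y := σ.injective hpr
    simp only [buildFun, hpr2] at hxy
    linear_combination hxy
  · intro y
    refine ⟨y - io n k (σ (σ⁻¹ (pr n k y))) - d (σ⁻¹ (pr n k y)) + io n k (σ⁻¹ (pr n k y)), ?_⟩
    have hpr : pr n k (y - io n k (σ (σ⁻¹ (pr n k y))) - d (σ⁻¹ (pr n k y))
        + io n k (σ⁻¹ (pr n k y))) = σ⁻¹ (pr n k y) := by
      rw [map_add, map_sub, map_sub, pr_io, pr_io, hd, Equiv.Perm.apply_inv_self]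
      ring
    simp only [buildFun, hpr]
    rw [Equiv.Perm.apply_inv_self]
    ring

noncomputable def buildPerm (σ : Equiv.Perm (ZMod n)) (d : ZMod n → ZMod (k*n))
    (hd : ∀ r, pr n k (d r) = 0) : Equiv.Perm (ZMod (k*n)) :=
  Equiv.ofBijective _ (buildFun_bij σ d hd)

lemma buildPerm_apply (σ : Equiv.Perm (ZMod n)) (d : ZMod n → ZMod (k*n))
    (hd : ∀ r, pr n k (d r) = 0) (x : ZMod (k*n)) :
    buildPerm σ d hd x = buildFun σ d x := rfl

lemma buildPerm_mem (σ : Equiv.Perm (ZMod n)) (d : ZMod n → ZMod (k*n))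
    (hd : ∀ r, pr n k (d r) = 0) (hsum : ∑ r : ZMod n, d r = 0) :
    buildPerm σ d hd ∈ HkSet n k := by
  rw [mem_HkSet_iff]
  constructor
  · intro x
    show buildFun σ d (x + n) = buildFun σ d x + n
    simp only [buildFun, pr_add_n]
    ring
  · have h1 : ∀ r : ZMod n, buildFun σ d (io n k r) = io n k (σ r) + d r := by
      intro r
      simp only [buildFun, pr_io]
      ring
    calc ∑ r : ZMod n, buildPerm σ d hd (io n k r)
        = ∑ r : ZMod n, (io n k (σ r) + d r) := Finset.sum_congr rfl fun r _ => h1 r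
      _ = (∑ r : ZMod n, io n k (σ r)) + ∑ r : ZMod n, d r := Finset.sum_add_distrib
      _ = (((n + 1).choose 2 : ℕ) : ZMod (k * n)) - n := by
          rw [hsum, Equiv.sum_comp σ (io n k), sum_io_eq, add_zero]

noncomputable def paramFun (p : Equiv.Perm (ZMod n) × ZS n k) : {v // v ∈ HkSet n k} :=
  ⟨buildPerm p.1 (fun r => (p.2.1 r).1) (fun r => (p.2.1 r).2), buildPerm_mem _ _ _ p.2.2⟩

lemma paramFun_bij : Function.Bijective (paramFun (n := n) (k := k)) := by
  constructor
  · rintro ⟨σ, d⟩ ⟨σ', d'⟩ h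
    have happ : ∀ r : ZMod n, io n k (σ r) + (d.1 r).1 = io n k (σ' r) + (d'.1 r).1 := by
      intro r
      have hc := congrArg (fun q : {v // v ∈ HkSet n k} => (q.1 : Equiv.Perm (ZMod (k*n))) (io n k r)) h
      simp only [paramFun, buildPerm_apply, buildFun, pr_io, sub_self, add_zero] at hc
      exact hc
    have hσ : σ = σ' := by
      apply Equiv.ext
      intro r
      have hc := congrArg (pr n k) (happ r)
      rw [map_add, map_add, pr_io, pr_io, (d.1 r).2, (d'.1 r).2, add_zero, add_zero] at hc
      exact hc
    have hd : d = d' := by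
      apply Subtype.ext
      funext r
      apply Subtype.ext
      have := happ r
      rw [hσ] at this
      linear_combination this
    rw [Prod.ext_iff]
    exact ⟨hσ, hd⟩
  · rintro ⟨v, hv⟩
    obtain ⟨hv1, hv2⟩ := mem_HkSet_iff.1 hv
    set σ : Equiv.Perm (ZMod n) := Equiv.ofBijective _ (vbar_bij hv1) with hσdef
    have hσr : ∀ r : ZMod n, σ r = pr n k (v (io n k r)) := fun r => rfl
    refine ⟨⟨σ, ⟨fun r => ⟨v (io n k r) - io n k (σ r), by
      rw [map_sub, pr_io, hσr]; ring⟩, ?_⟩⟩, ?_⟩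
    · show ∑ r : ZMod n, (v (io n k r) - io n k (σ r)) = 0
      rw [Finset.sum_sub_distrib, Equiv.sum_comp σ (io n k), sum_io_eq, hv2]
      ring
    · apply Subtype.ext
      apply Equiv.ext
      intro x
      show buildFun σ (fun r => v (io n k r) - io n k (σ r)) x = v x
      simp only [buildFun]
      have hvx : v x = v (io n k (pr n k x)) + (x - io n k (pr n k x)) :=
        hv1.congr (by rw [pr_io])
      rw [hvx]
      ring

lemma card_Hk (hk : k ≠ 0) : Nat.card (Hkgrp n k) = k ^ (n - 1) * n.factorial := by
  haveI : NeZero k := ⟨hk⟩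
  have h0 : Nat.card (Hkgrp n k) = Nat.card {v // v ∈ HkSet n k} :=
    Nat.card_congr (Equiv.subtypeEquivRight (fun v => Iff.rfl))
  have h1 : Nat.card {v // v ∈ HkSet n k} = Nat.card (Equiv.Perm (ZMod n) × ZS n k) :=
    (Nat.card_eq_of_bijective _ paramFun_bij).symm
  have hperm : Nat.card (Equiv.Perm (ZMod n)) = n.factorial := by
    rw [Nat.card_eq_fintype_card, Fintype.card_perm, ZMod.card]
  have hzs : Nat.card (ZS n k) = k ^ (n - 1) := by
    rw [Nat.card_congr (zsEquiv (n := n) (k := k)), Nat.card_fun,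
      Nat.card_congr (kerEquiv (n := n) hk).symm, Nat.card_eq_fintype_card (α := ZMod k),
      ZMod.card]
    congr 1
    rw [Nat.card_eq_fintype_card]
    have hcompl : Fintype.card {r : ZMod n // r ≠ 0}
        = Fintype.card (ZMod n) - Fintype.card {r : ZMod n // r = 0} :=
      Fintype.card_subtype_compl _
    rw [ZMod.card, Fintype.card_subtype_eq] at hcompl
    rw [hcompl]
  rw [h0, h1, Nat.card_prod, hperm, hzs, Nat.mul_comm]

end Count2

end Stmt16

/-- For every `k ≥ 1` the reduction map `φ : S̃_n → S̃_n(k)` (reducing an affine permutation of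
`ℤ` modulo `kn`) is a group homomorphism with range exactly `S̃_n(k)` (the affine permutations
of `ℤ_{kn}`), its kernel meets each maximal parabolic `K_{{i}} = ⟨s̃_j : j ≠ i⟩` trivially, and
`|S̃_n(k)| = k^{n-1}·n!`. -/
theorem stmt16 (n k : ℕ) (hn : 2 ≤ n) (hk : 1 ≤ k)
    (s : Fin n → Equiv.Perm ℤ) (hs : stdGens n s) :
    ∃ (H : Subgroup (Equiv.Perm ℤ)) (Hk : Subgroup (Equiv.Perm (ZMod (k * n)))),
      (H : Set (Equiv.Perm ℤ)) = {u : Equiv.Perm ℤ |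
          (∀ j : ℤ, u (j + n) = u j + n) ∧
          ∑ i ∈ Finset.Icc (1 : ℤ) (n : ℤ), u i = ((n + 1).choose 2 : ℤ)} ∧
      (Hk : Set (Equiv.Perm (ZMod (k * n)))) = {v : Equiv.Perm (ZMod (k * n)) |
          (∀ j : ZMod (k * n), v (j + n) = v j + n) ∧
          ∑ i ∈ Finset.Icc (1 : ℕ) n, v (i : ZMod (k * n)) =
            (((n + 1).choose 2 : ℕ) : ZMod (k * n))} ∧
      ∃ φ : H →* Equiv.Perm (ZMod (k * n)),
        (∀ (u : H) (j : ℤ), (φ u) ((j : ZMod (k * n))) =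
          (((u : Equiv.Perm ℤ) j : ℤ) : ZMod (k * n))) ∧
        φ.range = Hk ∧
        (∀ i : Fin n,
          φ.ker ⊓ Subgroup.comap H.subtype (Subgroup.closure (s '' {l | l ≠ i})) = ⊥) ∧
        Nat.card Hk = k ^ (n - 1) * Nat.factorial n := by
  haveI : NeZero n := ⟨by omega⟩
  haveI : NeZero (k * n) := ⟨Nat.mul_ne_zero (by omega) (by omega)⟩
  have hn0 : 0 < n := by omega
  refine ⟨Stmt16.Hgrp n hn0, Stmt16.Hkgrp n k, rfl, rfl, Stmt16.redHom n k hn0, ?_, ?_, ?_, ?_⟩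
  · intro u j
    exact Stmt16.redHom_intCast hn0 u j
  · exact Stmt16.redHom_range hn0
  · intro i
    rw [eq_bot_iff]
    intro x hx
    obtain ⟨hker, hpar⟩ := Subgroup.mem_inf.1 hx
    rw [Subgroup.mem_bot]
    have hpar' : (x : Equiv.Perm ℤ) ∈ Subgroup.closure (s '' {l | l ≠ i}) :=
      Subgroup.mem_comap.1 hpar
    have hx1 : (x : Equiv.Perm ℤ) = 1 := by
      apply Stmt16.ker_parab_eq_one (k := k) (by omega : k ≠ 0) hs i ?_ hpar'
      intro m
      have h1 := Stmt16.redHom_intCast (k := k) hn0 x m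
      rw [MonoidHom.mem_ker.1 hker] at h1
      exact h1.symm
    exact Subtype.ext hx1
  · exact Stmt16.card_Hk (by omega)
end
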